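/- Every chordal graph has a tree decomposition of minimum width in which every bag induces a clique. -/

import Mathlib

open SimpleGraph

/-- `G` is chordal: every cycle of length at least 4 has a chord, i.e. an edge of `G`
joining two vertices of the cycle that is not an edge of the cycle. -/
def IsChordal {V : Type*} (G : SimpleGraph V) : Prop :=
  ∀ ⦃u : V⦄ (c : G.Walk u u), c.IsCycle → 4 ≤ c.length →
    ∃ x y : V, x ∈ c.support ∧ y ∈ c.support ∧ G.Adj x y ∧ s(x, y) ∉ c.edges

/-- A (finite) tree decomposition of `G`. -/
structure TreeDecomp {V : Type*} (G : SimpleGraph V) where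
  ι : Type
  fin : Fintype ι
  T : SimpleGraph ι
  conn : T.Connected
  acyclic : T.IsAcyclic
  bag : ι → Finset V
  coversV : ∀ v : V, ∃ i : ι, v ∈ bag i
  coversE : ∀ ⦃u w : V⦄, G.Adj u w → ∃ i : ι, u ∈ bag i ∧ w ∈ bag i
  subtree : ∀ (v : V) ⦃i j : ι⦄ (p : T.Walk i j), p.IsPath →
      v ∈ bag i → v ∈ bag j → ∀ k ∈ p.support, v ∈ bag k

/-- The width of a tree decomposition: maximum bag size minus one. -/
noncomputable def TreeDecomp.width {V : Type*} {G : SimpleGraph V} (D : TreeDecomp G) : ℕ :=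
  (@Finset.univ D.ι D.fin).sup (fun i => (D.bag i).card) - 1

/-- The treewidth of `G`: the minimum width over all tree decompositions. -/
noncomputable def treewidth {V : Type*} (G : SimpleGraph V) : ℕ :=
  sInf {w : ℕ | ∃ D : TreeDecomp G, D.width = w}

open SimpleGraph

section Aux
variable {V : Type*} {G : SimpleGraph V}

/-- Append of two paths meeting only at the junction is a path. -/
lemma aux_isPath_append {u v w : V} {p : G.Walk u v} {q : G.Walk v w}
    (hp : p.IsPath) (hq : q.IsPath)
    (h : ∀ z, z ∈ p.support → z ∈ q.support → z = v) : (p.append q).IsPath := by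
  apply Walk.IsPath.mk'
  rw [Walk.support_append]
  refine List.Nodup.append hp.support_nodup (hq.support_nodup.sublist (List.tail_sublist _)) ?_
  intro z hz hz'
  have hzv := h z hz (List.mem_of_mem_tail hz')
  subst hzv
  have := hq.support_nodup
  rw [Walk.support_eq_cons] at this
  exact (List.nodup_cons.mp this).1 hz'

/-- Along a walk `r : j → k` with `k` in a set `S`, there is a first vertex `m ∈ S`,
together with the initial segment. -/
lemma aux_first_hit {ι : Type*} {T : SimpleGraph ι} {j k : ι} (r : T.Walk j k)
    (hr : r.IsPath) (S : Set ι) (hk : k ∈ S) :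
    ∃ m, ∃ w : T.Walk j m, w.IsPath ∧ m ∈ S ∧ (∀ z ∈ w.support, z ∈ r.support) ∧
      (∀ z ∈ w.support, z ∈ S → z = m) := by
  induction r with
  | nil =>
    exact ⟨_, Walk.nil, by simp, hk, by simp, by simp⟩
  | @cons a b c hadj r' ih =>
    by_cases ha : a ∈ S
    · refine ⟨a, Walk.nil, by simp, ha, by simp, by simp⟩
    · obtain ⟨m, w, hwp, hm, hsub, hmin⟩ := ih hr.of_cons hk
      have hanot : a ∉ r'.support := (Walk.cons_isPath_iff _ _).mp hr |>.2
      refine ⟨m, Walk.cons hadj w, ?_, hm, ?_, ?_⟩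
      · rw [Walk.cons_isPath_iff]
        exact ⟨hwp, fun hmem => hanot (hsub a hmem)⟩
      · intro z hz
        rw [Walk.support_cons, List.mem_cons] at hz
        rcases hz with rfl | hz
        · simp
        · rw [Walk.support_cons, List.mem_cons]; exact Or.inr (hsub z hz)
      · intro z hz hzS
        rw [Walk.support_cons, List.mem_cons] at hz
        rcases hz with rfl | hz
        · exact absurd hzS ha
        · exact hmin z hz hzS

/-- Median of three vertices in a connected graph: a vertex lying on a path
between each of the three pairs. -/
lemma aux_median {ι : Type*} {T : SimpleGraph ι} (hc : T.Connected) (i j k : ι) :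
    ∃ m, (∃ p : T.Walk i j, p.IsPath ∧ m ∈ p.support) ∧
         (∃ p : T.Walk i k, p.IsPath ∧ m ∈ p.support) ∧
         (∃ p : T.Walk j k, p.IsPath ∧ m ∈ p.support) := by
  classical
  obtain ⟨q0⟩ := hc i k
  obtain ⟨r0⟩ := hc j k
  set q := q0.bypass with hq
  set r := r0.bypass with hr
  have hqp : q.IsPath := Walk.bypass_isPath q0
  have hrp : r.IsPath := Walk.bypass_isPath r0
  obtain ⟨m, w, hwp, hmq, hsub, hmin⟩ :=
    aux_first_hit r hrp {z | z ∈ q.support} (by simp [Walk.end_mem_support])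
  have hmq' : m ∈ q.support := hmq
  refine ⟨m, ⟨(q.takeUntil m hmq').append w.reverse, ?_, ?_⟩, ⟨q, hqp, hmq'⟩,
    ⟨r, hrp, hsub m w.end_mem_support⟩⟩
  · refine aux_isPath_append (hqp.takeUntil hmq') hwp.reverse ?_
    intro z hz1 hz2
    rw [Walk.support_reverse, List.mem_reverse] at hz2
    exact hmin z hz2 (Walk.support_takeUntil_subset _ _ hz1)
  · rw [Walk.mem_support_append_iff]
    right
    rw [Walk.support_reverse, List.mem_reverse]
    exact w.end_mem_support

end Aux

section Helly
variable {V : Type*} {G : SimpleGraph V}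

/-- Helly property: every clique of `G` is contained in some bag of any tree
decomposition. -/
lemma aux_clique_bag (D : TreeDecomp G) :
    ∀ (n : ℕ) (W : Finset V), W.card ≤ n → G.IsClique (W : Set V) →
      ∃ i, ∀ v ∈ W, v ∈ D.bag i := by
  classical
  intro n
  induction n with
  | zero =>
    intro W hW _
    obtain ⟨i⟩ := D.conn.nonempty
    refine ⟨i, fun v hv => ?_⟩
    rw [Nat.le_zero, Finset.card_eq_zero] at hW
    simp [hW] at hv
  | succ n ih =>
    intro W hW hclique
    rcases Finset.eq_empty_or_nonempty W with rfl | ⟨a, ha⟩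
    · obtain ⟨i⟩ := D.conn.nonempty
      exact ⟨i, by simp⟩
    rcases Finset.eq_empty_or_nonempty (W.erase a) with hWa | ⟨b, hb⟩
    · obtain ⟨i, hi⟩ := D.coversV a
      refine ⟨i, fun v hv => ?_⟩
      have : v = a := by
        by_contra hva
        exact absurd (Finset.mem_erase.mpr ⟨hva, hv⟩) (by simp [hWa])
      exact this ▸ hi
    · have hba : b ≠ a := (Finset.mem_erase.mp hb).1
      have hbW : b ∈ W := (Finset.mem_erase.mp hb).2
      obtain ⟨i, hi⟩ := ih (W.erase b)
        (by have := Finset.card_erase_lt_of_mem hbW; omega)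
        (hclique.subset (by exact_mod_cast Finset.erase_subset _ _))
      obtain ⟨j, hj⟩ := ih (W.erase a)
        (by have := Finset.card_erase_lt_of_mem ha; omega)
        (hclique.subset (by exact_mod_cast Finset.erase_subset _ _))
      have hadj : G.Adj a b := hclique (by simpa using ha) (by simpa using hbW) (Ne.symm hba)
      obtain ⟨k, hka, hkb⟩ := D.coversE hadj
      obtain ⟨m, ⟨pij, hpij, hmij⟩, ⟨pik, hpik, hmik⟩, ⟨pjk, hpjk, hmjk⟩⟩ :=
        aux_median D.conn i j k
      refine ⟨m, fun v hv => ?_⟩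
      by_cases hvb : v = b
      · subst hvb
        exact D.subtree v pjk hpjk (hj v (Finset.mem_erase.mpr ⟨hba, hv⟩)) hkb m hmjk
      by_cases hva : v = a
      · subst hva
        exact D.subtree v pik hpik (hi v (Finset.mem_erase.mpr ⟨Ne.symm hba, hv⟩)) hka m hmik
      · exact D.subtree v pij hpij (hi v (Finset.mem_erase.mpr ⟨hvb, hv⟩))
          (hj v (Finset.mem_erase.mpr ⟨hva, hv⟩)) m hmij

/-- A tree decomposition all of whose bags are cliques has minimal width. -/
lemma aux_width_le (D0 D' : TreeDecomp G)
    (h0 : ∀ i : D0.ι, G.IsClique (D0.bag i : Set V)) : D0.width ≤ D'.width := by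
  classical
  letI := D0.fin
  letI := D'.fin
  have hne : (Finset.univ : Finset D0.ι).Nonempty := by
    obtain ⟨i⟩ := D0.conn.nonempty
    exact ⟨i, Finset.mem_univ i⟩
  obtain ⟨i0, _, hi0⟩ := Finset.exists_mem_eq_sup (Finset.univ : Finset D0.ι) hne
    (fun i => (D0.bag i).card)
  obtain ⟨j, hj⟩ := aux_clique_bag D' (D0.bag i0).card (D0.bag i0) le_rfl (h0 i0)
  have hcard : (D0.bag i0).card ≤ (D'.bag j).card :=
    Finset.card_le_card (fun v hv => hj v hv)
  have hsup : (Finset.univ : Finset D0.ι).sup (fun i => (D0.bag i).card) ≤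
      (Finset.univ : Finset D'.ι).sup (fun i => (D'.bag i).card) := by
    rw [hi0]
    exact le_trans hcard (Finset.le_sup (f := fun i => (D'.bag i).card) (Finset.mem_univ j))
  exact Nat.sub_le_sub_right hsup 1
end Helly

section Dirac
universe u
variable {V : Type*} {G : SimpleGraph V}

/-- There is a walk from `a` to `w` avoiding the set `S`. -/
def Avoid (G : SimpleGraph V) (S : Set V) (a w : V) : Prop :=
  ∃ p : G.Walk a w, ∀ z ∈ p.support, z ∉ S

/-- `v` is a simplicial vertex: its neighbourhood is a clique. -/
def Simplicial (G : SimpleGraph V) (v : V) : Prop :=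
  ∀ ⦃a b : V⦄, G.Adj v a → G.Adj v b → a ≠ b → G.Adj a b

lemma aux_avoid_reverse {S : Set V} {a w : V} (h : Avoid G S a w) : Avoid G S w a := by
  obtain ⟨p, hp⟩ := h
  exact ⟨p.reverse, fun z hz => hp z (by rwa [Walk.support_reverse, List.mem_reverse] at hz)⟩

lemma aux_avoid_mem_support {S : Set V} {a w : V} (p : G.Walk a w)
    (hp : ∀ z ∈ p.support, z ∉ S) {z : V} (hz : z ∈ p.support) : Avoid G S a z := by
  classical
  exact ⟨p.takeUntil z hz, fun t ht => hp t (Walk.support_takeUntil_subset _ _ ht)⟩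

lemma aux_avoid_notmem {S : Set V} {a w : V} (h : Avoid G S a w) : w ∉ S := by
  obtain ⟨p, hp⟩ := h; exact hp w p.end_mem_support

lemma aux_avoid_step {S : Set V} {a w z : V} (h : Avoid G S a w) (hadj : G.Adj w z)
    (hz : z ∉ S) : Avoid G S a z := by
  obtain ⟨p, hp⟩ := h
  refine ⟨p.concat hadj, fun t ht => ?_⟩
  rw [Walk.support_concat, List.mem_append] at ht
  rcases ht with ht | ht
  · exact hp t ht
  · simp at ht; subst ht; exact hz

lemma aux_avoid_trans {S : Set V} {a u w : V} (h1 : Avoid G S a u) (h2 : Avoid G S u w) :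
    Avoid G S a w := by
  obtain ⟨p, hp⟩ := h1; obtain ⟨q, hq⟩ := h2
  refine ⟨p.append q, fun z hz => ?_⟩
  rw [Walk.mem_support_append_iff] at hz
  rcases hz with hz | hz
  · exact hp z hz
  · exact hq z hz

lemma aux_edge_of_length_one {u w : V} (r : G.Walk u w) (h : r.length = 1) :
    s(u, w) ∈ r.edges := by
  cases r with
  | nil => simp at h
  | @cons _ b _ hadj r' =>
    have h0 : r'.length = 0 := by rw [Walk.length_cons] at h; omega
    have hbw : b = w := Walk.eq_of_length_eq_zero h0
    subst hbw
    simp [Walk.edges_cons]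

/-- Shortcut: a chord on a walk yields a strictly shorter walk within the same support. -/
lemma aux_shortcut {x y u w : V} (p : G.Walk x y) (hu : u ∈ p.support) (hw : w ∈ p.support)
    (h : G.Adj u w) (he : s(u, w) ∉ p.edges) :
    ∃ q : G.Walk x y, q.length < p.length ∧ ∀ z ∈ q.support, z ∈ p.support := by
  classical
  have hspec : (p.takeUntil u hu).append (p.dropUntil u hu) = p := p.take_spec hu
  set q1 := p.takeUntil u hu with hq1
  set q2 := p.dropUntil u hu with hq2
  have hlen : q1.length + q2.length = p.length := by
    have := congrArg Walk.length hspec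
    rwa [Walk.length_append] at this
  have hw12 : w ∈ q1.support ∨ w ∈ q2.support := by
    rw [← hspec, Walk.mem_support_append_iff] at hw
    exact hw
  have hq1sub : ∀ z ∈ q1.support, z ∈ p.support := fun z hz =>
    Walk.support_takeUntil_subset _ _ hz
  have hq2sub : ∀ z ∈ q2.support, z ∈ p.support := fun z hz =>
    Walk.support_dropUntil_subset _ _ hz
  have hq1e : ∀ e ∈ q1.edges, e ∈ p.edges := fun e hz => Walk.edges_takeUntil_subset _ _ hz
  have hq2e : ∀ e ∈ q2.edges, e ∈ p.edges := fun e hz => Walk.edges_dropUntil_subset _ _ hz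
  rcases hw12 with hw1 | hw2
  · -- w occurs before u
    set r := q1.takeUntil w hw1 with hr
    set r2 := q1.dropUntil w hw1 with hr2
    have hlen1 : r.length + r2.length = q1.length := by
      have := congrArg Walk.length (q1.take_spec hw1)
      rwa [Walk.length_append] at this
    have h2 : 2 ≤ r2.length := by
      rcases Nat.lt_or_ge r2.length 2 with hlt | hge
      · exfalso
        have : r2.length = 0 ∨ r2.length = 1 := by omega
        rcases this with h0 | h1
        · exact h.ne' (Walk.eq_of_length_eq_zero h0)
        · have := aux_edge_of_length_one r2 h1
          apply he
          have := hq1e _ (Walk.edges_dropUntil_subset _ _ this)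
          rwa [Sym2.eq_swap] at this
      · exact hge
    refine ⟨r.append (Walk.cons h.symm q2), ?_, ?_⟩
    · rw [Walk.length_append, Walk.length_cons]; omega
    · intro z hz
      rw [Walk.mem_support_append_iff] at hz
      rcases hz with hz | hz
      · exact hq1sub z (Walk.support_takeUntil_subset _ _ hz)
      · rw [Walk.support_cons, List.mem_cons] at hz
        rcases hz with rfl | hz
        · exact hw
        · exact hq2sub z hz
  · -- w occurs after u
    set r := q2.takeUntil w hw2 with hr
    set r2 := q2.dropUntil w hw2 with hr2
    have hlen1 : r.length + r2.length = q2.length := by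
      have := congrArg Walk.length (q2.take_spec hw2)
      rwa [Walk.length_append] at this
    have h2 : 2 ≤ r.length := by
      rcases Nat.lt_or_ge r.length 2 with hlt | hge
      · exfalso
        have : r.length = 0 ∨ r.length = 1 := by omega
        rcases this with h0 | h1
        · exact h.ne (Walk.eq_of_length_eq_zero h0)
        · exact he (hq2e _ (Walk.edges_takeUntil_subset _ _ (aux_edge_of_length_one r h1)))
      · exact hge
    refine ⟨q1.append (Walk.cons h r2), ?_, ?_⟩
    · rw [Walk.length_append, Walk.length_cons]; omega
    · intro z hz
      rw [Walk.mem_support_append_iff] at hz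
      rcases hz with hz | hz
      · exact hq1sub z hz
      · rw [Walk.support_cons, List.mem_cons] at hz
        rcases hz with rfl | hz
        · exact hq1sub _ q1.end_mem_support
        · exact hq2sub z (Walk.support_dropUntil_subset _ _ hz)

/-- Induced subgraphs of chordal graphs are chordal. -/
lemma aux_induce_chordal (hG : IsChordal G) (s : Set V) : IsChordal (G.induce s) := by
  intro u c hc hlen
  classical
  set f : G.induce s ↪g G := Embedding.induce s with hf
  set c' := c.map f.toHom with hc'def
  have hinj : Function.Injective (f.toHom : ↥s → V) := f.injective
  have hc' : c'.IsCycle := (Walk.map_isCycle_iff_of_injective hinj).mpr hc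
  have hlen' : 4 ≤ c'.length := by rwa [hc'def, Walk.length_map]
  obtain ⟨p, q, hp, hq, hadj, hpq⟩ := hG c' hc' hlen'
  rw [hc'def, Walk.support_map, List.mem_map] at hp hq
  obtain ⟨p0, hp0, rfl⟩ := hp
  obtain ⟨q0, hq0, rfl⟩ := hq
  refine ⟨p0, q0, hp0, hq0, ?_, ?_⟩
  · exact f.map_adj_iff.mp hadj
  · intro hmem
    apply hpq
    rw [hc'def, Walk.edges_map]
    rw [List.mem_map]
    exact ⟨s(p0, q0), hmem, Sym2.map_pair_eq _ _ _⟩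

/-- Minimality of a separator yields neighbours in the `a`-side component. -/
lemma aux_nbr (G : SimpleGraph V) {a b : V} {S : Finset V}
    (hSa : a ∉ S) (hSb : b ∉ S) (hsep : ¬ Avoid G (↑S) a b)
    (hmin : ∀ s : Finset V, a ∉ s → b ∉ s → ¬ Avoid G (↑s) a b → S.card ≤ s.card)
    {x : V} (hx : x ∈ S) : ∃ w, Avoid G (↑S) a w ∧ G.Adj x w := by
  classical
  by_contra hno
  push_neg at hno
  have hsep' : ¬ Avoid G (↑(S.erase x)) a b := by
    rintro ⟨p, hp⟩
    by_cases hxp : x ∈ p.support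
    · set q := p.takeUntil x hxp with hqdef
      have hq : ∀ z ∈ q.support, z ∉ (↑(S.erase x) : Set V) :=
        fun z hz => hp z (Walk.support_takeUntil_subset _ _ hz)
      have hax : x ≠ a := fun hh => hSa (hh ▸ hx)
      obtain ⟨w, hadj, r, hrw⟩ := Walk.exists_eq_cons_of_ne hax q.reverse
      have hcount : List.count x q.support = 1 := Walk.count_support_takeUntil_eq_one p hxp
      have hxr : x ∉ r.support := by
        have h1 : q.reverse.support = x :: r.support := by rw [hrw, Walk.support_cons]
        have h2 : List.count x q.reverse.support = 1 := by
          rw [Walk.support_reverse, List.count_reverse]; exact hcount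
        rw [h1, List.count_cons_self] at h2
        intro hmem
        have := List.count_pos_iff.mpr hmem
        omega
      have hrS : ∀ z ∈ r.support, z ∉ (↑S : Set V) := by
        intro z hz hzS
        have hzq : z ∈ q.support := by
          rw [← List.mem_reverse, ← Walk.support_reverse, hrw, Walk.support_cons]
          exact List.mem_cons_of_mem _ hz
        have hz' := hq z hzq
        have hzx : z ≠ x := fun hh => hxr (hh ▸ hz)
        exact hz' (by rw [Finset.coe_erase]; exact ⟨hzS, by simpa using hzx⟩)
      exact hno w (aux_avoid_reverse ⟨r, hrS⟩) hadj
    · refine hsep ⟨p, fun z hz hzS => ?_⟩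
      have hzx : z ≠ x := fun hh => hxp (hh ▸ hz)
      exact hp z hz (by rw [Finset.coe_erase]; exact ⟨hzS, by simpa using hzx⟩)
  have h1 := hmin (S.erase x) (fun hh => hSa (Finset.mem_of_mem_erase hh))
    (fun hh => hSb (Finset.mem_of_mem_erase hh)) hsep'
  have h2 := Finset.card_erase_lt_of_mem hx
  omega

end Dirac

section Dirac2
universe u

/-- From a minimal separator with clique property, extract a simplicial vertex on the
`a`-side. -/
lemma aux_side {n : ℕ} {V : Type u} [Fintype V] {G : SimpleGraph V} (hG : IsChordal G)
    (IH : ∀ {V' : Type u} [Fintype V'] (G' : SimpleGraph V'), IsChordal G' →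
      Fintype.card V' ≤ n →
      (∀ x y : V', x ≠ y → G'.Adj x y) ∨
        ∃ x y, x ≠ y ∧ ¬ G'.Adj x y ∧ Simplicial G' x ∧ Simplicial G' y)
    (hcard : Fintype.card V ≤ n + 1)
    {a b : V} (hnadj : ¬ G.Adj a b) {S : Finset V}
    (hSa : a ∉ S) (hSb : b ∉ S) (hsep : ¬ Avoid G (↑S) a b)
    (hclique : ∀ x ∈ S, ∀ y ∈ S, x ≠ y → G.Adj x y) :
    ∃ u, Avoid G (↑S) a u ∧ Simplicial G u := by
  classical
  set A : Set V := {w | Avoid G (↑S) a w} with hA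
  set sA : Set V := A ∪ ↑S with hsA
  have haA : a ∈ A := ⟨Walk.nil, by intro z hz; simp at hz; subst hz; simpa using hSa⟩
  have hbA : b ∉ A := fun h => hsep h
  have hbsA : b ∉ sA := by
    rintro (h | h)
    · exact hbA h
    · exact hSb (by simpa using h)
  have hcard' : Fintype.card ↥sA ≤ n := by
    have hlt : Fintype.card ↥sA < Fintype.card V := by
      refine Fintype.card_lt_of_injective_of_notMem (Subtype.val) Subtype.coe_injective
        (b := b) ?_
      rintro ⟨⟨w, hw⟩, rfl⟩
      exact hbsA hw
    omega
  have hch : IsChordal (G.induce sA) := aux_induce_chordal hG sA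
  have hnbr : ∀ u, u ∈ A → ∀ z, G.Adj u z → z ∈ sA := by
    intro u hu z hadj
    by_cases hz : z ∈ (↑S : Set V)
    · exact Or.inr hz
    · exact Or.inl (aux_avoid_step hu hadj hz)
  have key : ∀ (u : ↥sA), Simplicial (G.induce sA) u → (u : V) ∈ A →
      ∃ w, Avoid G (↑S) a w ∧ Simplicial G w := by
    intro u hu huA
    refine ⟨u, huA, ?_⟩
    intro z1 z2 h1 h2 hz
    have hz1 : z1 ∈ sA := hnbr u huA z1 h1
    have hz2 : z2 ∈ sA := hnbr u huA z2 h2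
    have hne : (⟨z1, hz1⟩ : ↥sA) ≠ ⟨z2, hz2⟩ := fun hh => hz (congrArg Subtype.val hh)
    have hadj1 : (G.induce sA).Adj u ⟨z1, hz1⟩ := h1
    have hadj2 : (G.induce sA).Adj u ⟨z2, hz2⟩ := h2
    exact hu hadj1 hadj2 hne
  obtain hcomp | ⟨u1, u2, hne, hnadj12, hs1, hs2⟩ := IH (G.induce sA) hch hcard'
  · refine key ⟨a, Or.inl haA⟩ ?_ haA
    intro z1 z2 _ _ hzne
    exact hcomp z1 z2 hzne
  · by_cases h1A : (u1 : V) ∈ A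
    · exact key u1 hs1 h1A
    · have h1S : (u1 : V) ∈ (↑S : Set V) := by
        rcases u1.2 with h | h
        · exact absurd h h1A
        · exact h
      have h2A : (u2 : V) ∈ A := by
        rcases u2.2 with h | h
        · exact h
        · exfalso
          have hval : (u1 : V) ≠ (u2 : V) := fun hh => hne (Subtype.ext hh)
          have : G.Adj u1 u2 := hclique _ (by simpa using h1S) _ (by simpa using h) hval
          exact hnadj12 this
      exact key u2 hs2 h2A

/-- Dirac's theorem: a finite chordal graph is complete or has two nonadjacent
simplicial vertices. -/
lemma aux_dirac : ∀ (n : ℕ) {V : Type u} [Fintype V] (G : SimpleGraph V), IsChordal G →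
    Fintype.card V ≤ n →
    (∀ x y : V, x ≠ y → G.Adj x y) ∨
      ∃ x y, x ≠ y ∧ ¬ G.Adj x y ∧ Simplicial G x ∧ Simplicial G y := by
  intro n
  induction n with
  | zero =>
    intro V _ G _ hc
    left
    intro x y _
    have : 0 < Fintype.card V := Fintype.card_pos_iff.mpr ⟨x⟩
    omega
  | succ n IH =>
    intro V _ G hG hcard
    classical
    by_cases hcomp : ∀ x y : V, x ≠ y → G.Adj x y
    · left; exact hcomp
    right
    push_neg at hcomp
    obtain ⟨a, b, hab, hnadj⟩ := hcomp
    set Sep : Set (Finset V) := {s | a ∉ s ∧ b ∉ s ∧ ¬ Avoid G (↑s) a b} with hSepDef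
    have hSepNe : ((Finset.univ.erase a).erase b) ∈ Sep := by
      refine ⟨by simp [hab], by simp, ?_⟩
      rintro ⟨p, hp⟩
      obtain ⟨w, hadj, p', rfl⟩ := Walk.exists_eq_cons_of_ne hab p
      have hw : w ∈ (Walk.cons hadj p').support := by
        rw [Walk.support_cons]
        exact List.mem_cons_of_mem _ p'.start_mem_support
      have hw' : w = b ∨ w = a := by
        by_contra hcon
        push_neg at hcon
        exact hp w hw (by simp [Finset.mem_erase, hcon.1, hcon.2])
      rcases hw' with rfl | rfl
      · exact hnadj hadj
      · exact G.loopless.irrefl _ hadj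
    set cardset : Set ℕ := (fun s : Finset V => s.card) '' Sep with hcsdef
    have hcne : cardset.Nonempty := ⟨_, _, hSepNe, rfl⟩
    obtain ⟨S, hSSep, hScard⟩ := Nat.sInf_mem hcne
    obtain ⟨hSa, hSb, hsep⟩ := hSSep
    have hmin : ∀ s : Finset V, a ∉ s → b ∉ s → ¬ Avoid G (↑s) a b → S.card ≤ s.card := by
      intro s h1 h2 h3
      have h4 : S.card = sInf cardset := hScard
      have h5 : sInf cardset ≤ s.card := Nat.sInf_le ⟨s, ⟨h1, h2, h3⟩, rfl⟩
      omega
    have hsepba : ¬ Avoid G (↑S) b a := fun h => hsep (aux_avoid_reverse h)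
    have hminba : ∀ s : Finset V, b ∉ s → a ∉ s → ¬ Avoid G (↑s) b a → S.card ≤ s.card :=
      fun s h2 h1 h3 => hmin s h1 h2 (fun h => h3 (aux_avoid_reverse h))
    have hnadjba : ¬ G.Adj b a := fun h => hnadj h.symm
    -- S is a clique
    have hSclique : ∀ x ∈ S, ∀ y ∈ S, x ≠ y → G.Adj x y := by
      intro x hx y hy hxy
      by_contra hnxy
      set A : Set V := {w | Avoid G (↑S) a w} with hA
      set B : Set V := {w | Avoid G (↑S) b w} with hB
      have hABdisj : ∀ z, z ∈ A → z ∈ B → False := fun z h1 h2 =>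
        hsep (aux_avoid_trans h1 (aux_avoid_reverse h2))
      obtain ⟨a1, ha1A, hxa1⟩ := aux_nbr G hSa hSb hsep hmin hx
      obtain ⟨a2, ha2A, hya2⟩ := aux_nbr G hSa hSb hsep hmin hy
      obtain ⟨b1, hb1B, hxb1⟩ := aux_nbr G hSb hSa hsepba hminba hx
      obtain ⟨b2, hb2B, hyb2⟩ := aux_nbr G hSb hSa hsepba hminba hy
      have hwalkA : ∃ p : G.Walk x y, ∀ z ∈ p.support, z = x ∨ z = y ∨ z ∈ A := by
        obtain ⟨p1, hp1⟩ := ha1A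
        obtain ⟨p2, hp2⟩ := ha2A
        refine ⟨Walk.cons hxa1 ((p1.reverse.append p2).concat hya2.symm), ?_⟩
        intro z hz
        rw [Walk.support_cons, List.mem_cons] at hz
        rcases hz with rfl | hz
        · exact Or.inl rfl
        rw [Walk.support_concat, List.mem_append] at hz
        rcases hz with hz | hz
        · right; right
          rw [Walk.mem_support_append_iff] at hz
          rcases hz with hz | hz
          · rw [Walk.support_reverse, List.mem_reverse] at hz
            exact aux_avoid_mem_support p1 hp1 hz
          · exact aux_avoid_mem_support p2 hp2 hz
        · simp at hz; subst hz; exact Or.inr (Or.inl rfl)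
      have hwalkB : ∃ p : G.Walk x y, ∀ z ∈ p.support, z = x ∨ z = y ∨ z ∈ B := by
        obtain ⟨p1, hp1⟩ := hb1B
        obtain ⟨p2, hp2⟩ := hb2B
        refine ⟨Walk.cons hxb1 ((p1.reverse.append p2).concat hyb2.symm), ?_⟩
        intro z hz
        rw [Walk.support_cons, List.mem_cons] at hz
        rcases hz with rfl | hz
        · exact Or.inl rfl
        rw [Walk.support_concat, List.mem_append] at hz
        rcases hz with hz | hz
        · right; right
          rw [Walk.mem_support_append_iff] at hz
          rcases hz with hz | hz
          · rw [Walk.support_reverse, List.mem_reverse] at hz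
            exact aux_avoid_mem_support p1 hp1 hz
          · exact aux_avoid_mem_support p2 hp2 hz
        · simp at hz; subst hz; exact Or.inr (Or.inl rfl)
      set LA : Set ℕ := {l | ∃ p : G.Walk x y, p.IsPath ∧
        (∀ z ∈ p.support, z = x ∨ z = y ∨ z ∈ A) ∧ p.length = l} with hLAdef
      have hLAne : LA.Nonempty := by
        obtain ⟨p, hp⟩ := hwalkA
        exact ⟨p.bypass.length, p.bypass, p.bypass_isPath,
          fun z hz => hp z (p.support_bypass_subset hz), rfl⟩
      obtain ⟨P1, hP1path, hP1A, hP1len⟩ := Nat.sInf_mem hLAne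
      have hminA : ∀ q : G.Walk x y, (∀ z ∈ q.support, z = x ∨ z = y ∨ z ∈ A) →
          P1.length ≤ q.length := by
        intro q hq
        have h1 : sInf LA ≤ q.bypass.length := Nat.sInf_le ⟨q.bypass, q.bypass_isPath,
          fun z hz => hq z (q.support_bypass_subset hz), rfl⟩
        have h2 := q.length_bypass_le
        omega
      set LB : Set ℕ := {l | ∃ p : G.Walk x y, p.IsPath ∧
        (∀ z ∈ p.support, z = x ∨ z = y ∨ z ∈ B) ∧ p.length = l} with hLBdef
      have hLBne : LB.Nonempty := by
        obtain ⟨p, hp⟩ := hwalkB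
        exact ⟨p.bypass.length, p.bypass, p.bypass_isPath,
          fun z hz => hp z (p.support_bypass_subset hz), rfl⟩
      obtain ⟨P2, hP2path, hP2B, hP2len⟩ := Nat.sInf_mem hLBne
      have hminB : ∀ q : G.Walk x y, (∀ z ∈ q.support, z = x ∨ z = y ∨ z ∈ B) →
          P2.length ≤ q.length := by
        intro q hq
        have h1 : sInf LB ≤ q.bypass.length := Nat.sInf_le ⟨q.bypass, q.bypass_isPath,
          fun z hz => hq z (q.support_bypass_subset hz), rfl⟩
        have h2 := q.length_bypass_le
        omega
      have hlen1 : 2 ≤ P1.length := by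
        rcases Nat.lt_or_ge P1.length 2 with hlt | hge
        · exfalso
          have : P1.length = 0 ∨ P1.length = 1 := by omega
          rcases this with h0 | h1
          · exact hxy (Walk.eq_of_length_eq_zero h0)
          · exact hnxy (Walk.adj_of_mem_edges P1 (aux_edge_of_length_one P1 h1))
        · exact hge
      have hlen2 : 2 ≤ P2.length := by
        rcases Nat.lt_or_ge P2.length 2 with hlt | hge
        · exfalso
          have : P2.length = 0 ∨ P2.length = 1 := by omega
          rcases this with h0 | h1
          · exact hxy (Walk.eq_of_length_eq_zero h0)
          · exact hnxy (Walk.adj_of_mem_edges P2 (aux_edge_of_length_one P2 h1))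
        · exact hge
      have hinter : ∀ z, z ∈ P1.support → z ∈ P2.support → z = x ∨ z = y := by
        intro z h1 h2
        rcases hP1A z h1 with rfl | rfl | hzA
        · exact Or.inl rfl
        · exact Or.inr rfl
        rcases hP2B z h2 with rfl | rfl | hzB
        · exact Or.inl rfl
        · exact Or.inr rfl
        · exact (hABdisj z hzA hzB).elim
      set c : G.Walk x x := P1.append P2.reverse with hcdef
      have hcyc : c.IsCycle := by
        rw [Walk.isCycle_def]
        refine ⟨⟨?_⟩, ?_, ?_⟩
        · rw [hcdef, Walk.edges_append, Walk.edges_reverse]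
          refine List.Nodup.append hP1path.isTrail.edges_nodup
            (List.nodup_reverse.mpr hP2path.isTrail.edges_nodup) ?_
          intro e he1 he2
          rw [List.mem_reverse] at he2
          revert he1 he2
          induction e using Sym2.ind with
          | _ z1 z2 =>
            intro he1 he2
            have hz1 := Walk.fst_mem_support_of_mem_edges P1 he1
            have hz2 := Walk.snd_mem_support_of_mem_edges P1 he1
            have hz1' := Walk.fst_mem_support_of_mem_edges P2 he2
            have hz2' := Walk.snd_mem_support_of_mem_edges P2 he2
            have hadj12 := Walk.adj_of_mem_edges P1 he1
            rcases hinter z1 hz1 hz1' with rfl | rfl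
            · rcases hinter z2 hz2 hz2' with rfl | rfl
              · exact hadj12.ne rfl
              · exact hnxy hadj12
            · rcases hinter z2 hz2 hz2' with rfl | rfl
              · exact hnxy hadj12.symm
              · exact hadj12.ne rfl
        · intro hnil
          have := congrArg Walk.length hnil
          rw [hcdef, Walk.length_append, Walk.length_reverse] at this
          simp only [Walk.length_nil] at this
          omega
        · have hsupp : c.support.tail = P1.support.tail ++ P2.reverse.support.tail := by
            rw [hcdef, Walk.support_append]
            conv_lhs => rw [Walk.support_eq_cons P1]
            simp
          rw [hsupp]
          have hx_not_tail : x ∉ P1.support.tail := by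
            have hnd := hP1path.support_nodup
            rw [Walk.support_eq_cons P1] at hnd
            exact (List.nodup_cons.mp hnd).1
          have hy_not_tail : y ∉ P2.reverse.support.tail := by
            have hnd := hP2path.reverse.support_nodup
            rw [Walk.support_eq_cons P2.reverse] at hnd
            exact (List.nodup_cons.mp hnd).1
          refine List.Nodup.append
            (hP1path.support_nodup.sublist (List.tail_sublist _))
            (hP2path.reverse.support_nodup.sublist (List.tail_sublist _)) ?_
          intro z hz1 hz2
          have hz1' : z ∈ P1.support := List.mem_of_mem_tail hz1
          have hz2' : z ∈ P2.support := by
            have := List.mem_of_mem_tail hz2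
            rwa [Walk.support_reverse, List.mem_reverse] at this
          have hzx : z ≠ x := fun hh => hx_not_tail (hh ▸ hz1)
          have hzy : z ≠ y := fun hh => hy_not_tail (hh ▸ hz2)
          rcases hinter z hz1' hz2' with rfl | rfl
          · exact hzx rfl
          · exact hzy rfl
      have hclen : 4 ≤ c.length := by
        rw [hcdef, Walk.length_append, Walk.length_reverse]; omega
      obtain ⟨z1, z2, hz1c, hz2c, hzadj, hze⟩ := hG c hcyc hclen
      have hmemc : ∀ z, z ∈ c.support → z ∈ P1.support ∨ z ∈ P2.support := by
        intro z hz
        rw [hcdef, Walk.mem_support_append_iff] at hz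
        rcases hz with hz | hz
        · exact Or.inl hz
        · right; rwa [Walk.support_reverse, List.mem_reverse] at hz
      have hne1 : s(z1, z2) ∉ P1.edges := by
        intro hmem
        exact hze (by rw [hcdef, Walk.edges_append]; exact List.mem_append_left _ hmem)
      have hne2 : s(z1, z2) ∉ P2.edges := by
        intro hmem
        refine hze ?_
        rw [hcdef, Walk.edges_append]
        refine List.mem_append_right _ ?_
        rw [Walk.edges_reverse, List.mem_reverse]
        exact hmem
      have hshort1 : z1 ∈ P1.support → z2 ∈ P1.support → False := by
        intro h1 h2
        obtain ⟨q, hqlen, hqsub⟩ := aux_shortcut P1 h1 h2 hzadj hne1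
        have := hminA q (fun z hz => hP1A z (hqsub z hz))
        omega
      have hshort2 : z1 ∈ P2.support → z2 ∈ P2.support → False := by
        intro h1 h2
        obtain ⟨q, hqlen, hqsub⟩ := aux_shortcut P2 h1 h2 hzadj hne2
        have := hminB q (fun z hz => hP2B z (hqsub z hz))
        omega
      have hcross : ∀ w1 w2, G.Adj w1 w2 → w1 ∈ P1.support → w1 ∉ P2.support →
          w2 ∈ P2.support → w2 ∉ P1.support → False := by
        intro w1 w2 hadjw h1 h1' h2 h2'
        have hw1A : w1 ∈ A := by
          rcases hP1A w1 h1 with rfl | rfl | h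
          · exact absurd P2.start_mem_support h1'
          · exact absurd P2.end_mem_support h1'
          · exact h
        have hw2B : w2 ∈ B := by
          rcases hP2B w2 h2 with rfl | rfl | h
          · exact absurd P1.start_mem_support h2'
          · exact absurd P1.end_mem_support h2'
          · exact h
        have hw2S : w2 ∉ (↑S : Set V) := aux_avoid_notmem hw2B
        exact hABdisj w2 (aux_avoid_step hw1A hadjw hw2S) hw2B
      rcases hmemc z1 hz1c with h1 | h1 <;> rcases hmemc z2 hz2c with h2 | h2
      · exact hshort1 h1 h2
      · by_cases hz2P1 : z2 ∈ P1.support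
        · exact hshort1 h1 hz2P1
        · by_cases hz1P2 : z1 ∈ P2.support
          · exact hshort2 hz1P2 h2
          · exact hcross z1 z2 hzadj h1 hz1P2 h2 hz2P1
      · by_cases hz1P1 : z1 ∈ P1.support
        · exact hshort1 hz1P1 h2
        · by_cases hz2P2 : z2 ∈ P2.support
          · exact hshort2 h1 hz2P2
          · exact hcross z2 z1 hzadj.symm h2 hz2P2 h1 hz1P1
      · exact hshort2 h1 h2
    obtain ⟨u, huA, hus⟩ := aux_side hG (fun {V'} _ G' h1 h2 => IH G' h1 h2) hcard
      hnadj hSa hSb hsep hSclique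
    obtain ⟨u', hu'B, hu's⟩ := aux_side hG (fun {V'} _ G' h1 h2 => IH G' h1 h2) hcard
      hnadjba hSb hSa hsepba hSclique
    have hneu : u ≠ u' := by
      rintro rfl
      exact hsep (aux_avoid_trans huA (aux_avoid_reverse hu'B))
    have hnadju : ¬ G.Adj u u' := by
      intro hadj
      have hu'S : u' ∉ (↑S : Set V) := aux_avoid_notmem hu'B
      exact hsep (aux_avoid_trans (aux_avoid_step huA hadj hu'S) (aux_avoid_reverse hu'B))
    exact ⟨u, u', hneu, hnadju, hus, hu's⟩
end Dirac2

section PEO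
universe u

/-- The equivalence `Option {w ≠ v} ≃ V`. -/
def auxOptEquiv {V : Type u} (v : V) [DecidableEq V] :
    Option ↥({w : V | w ≠ v}) ≃ V where
  toFun o := o.elim v Subtype.val
  invFun w := if h : w = v then none else some ⟨w, h⟩
  left_inv o := by
    match o with
    | none => simp
    | some ⟨w, hw⟩ =>
      have hw' : w ≠ v := hw
      simp [hw']
  right_inv w := by
    by_cases h : w = v <;> simp [h]

lemma aux_simplicial_exists {V : Type u} [Fintype V] (G : SimpleGraph V)
    (hG : IsChordal G) (hne : Nonempty V) : ∃ v, Simplicial G v := by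
  obtain hcomp | ⟨x, y, _, _, hs, _⟩ := aux_dirac (Fintype.card V) G hG le_rfl
  · obtain ⟨v⟩ := hne
    exact ⟨v, fun a b _ _ hab => hcomp a b hab⟩
  · exact ⟨x, hs⟩

/-- Perfect elimination orderings exist for chordal graphs. -/
lemma aux_peo : ∀ (n : ℕ) {V : Type u} [Fintype V] (G : SimpleGraph V), IsChordal G →
    Fintype.card V = n →
    ∃ e : Fin n ≃ V, ∀ k p q : Fin n, k < p → k < q → G.Adj (e k) (e p) →
      G.Adj (e k) (e q) → p ≠ q → G.Adj (e p) (e q) := by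
  intro n
  induction n with
  | zero =>
    intro V _ G _ hcard
    have : IsEmpty V := Fintype.card_eq_zero_iff.mp hcard
    exact ⟨Equiv.equivOfIsEmpty (Fin 0) V, fun k => k.elim0⟩
  | succ n IH =>
    intro V _ G hG hcard
    classical
    have hne : Nonempty V := Fintype.card_pos_iff.mp (by omega)
    obtain ⟨v, hv⟩ := aux_simplicial_exists G hG hne
    set s : Set V := {w | w ≠ v} with hsdef
    have hcard' : Fintype.card ↥s = n := by
      have h1 : Fintype.card {x : V // ¬ x = v} =
          Fintype.card V - Fintype.card {x : V // x = v} :=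
        Fintype.card_subtype_compl _
      have h2 : Fintype.card {x : V // x = v} = 1 := Fintype.card_subtype_eq v
      have h3 : Fintype.card ↥s = Fintype.card {x : V // ¬ x = v} :=
        Fintype.card_congr (Equiv.subtypeEquivRight (fun w => Iff.rfl))
      omega
    obtain ⟨e', hprop⟩ := IH (G.induce s) (aux_induce_chordal hG s) hcard'
    set e0 : Fin (n + 1) ≃ V :=
      (finSuccEquiv n).trans (e'.optionCongr.trans (auxOptEquiv v)) with he0def
    have he0 : e0 0 = v := by
      simp [he0def, Equiv.trans_apply, finSuccEquiv_zero, Equiv.optionCongr_apply,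
        auxOptEquiv]
    have heS : ∀ k : Fin n, e0 k.succ = ↑(e' k) := by
      intro k
      simp [he0def, Equiv.trans_apply, finSuccEquiv_succ, Equiv.optionCongr_apply,
        auxOptEquiv]
    refine ⟨e0, ?_⟩
    intro k p q hkp hkq h1 h2 hpq
    rcases Fin.eq_zero_or_eq_succ k with rfl | ⟨k', rfl⟩
    · rw [he0] at h1 h2
      exact hv h1 h2 (fun hh => hpq (e0.injective hh))
    · rcases Fin.eq_zero_or_eq_succ p with rfl | ⟨p', rfl⟩
      · exact absurd hkp (by simp)
      rcases Fin.eq_zero_or_eq_succ q with rfl | ⟨q', rfl⟩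
      · exact absurd hkq (by simp)
      rw [heS, heS] at h1
      rw [heS, heS] at h2
      have h1' : (G.induce s).Adj (e' k') (e' p') := h1
      have h2' : (G.induce s).Adj (e' k') (e' q') := h2
      have hkp' : k' < p' := by rwa [Fin.succ_lt_succ_iff] at hkp
      have hkq' : k' < q' := by rwa [Fin.succ_lt_succ_iff] at hkq
      have hpq' : p' ≠ q' := fun hh => hpq (by rw [hh])
      have hres := hprop k' p' q' hkp' hkq' h1' h2' hpq'
      rw [heS, heS]
      exact hres
end PEO

section PTree

/-- The graph of a parent map on `Fin m`. -/
def auxPTree (m : ℕ) (P : Fin m → Fin m) : SimpleGraph (Fin m) where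
  Adj x y := x ≠ y ∧ (P x = y ∨ P y = x)
  symm := by
    constructor
    intro x y h
    exact ⟨h.1.symm, h.2.symm⟩
  loopless := ⟨fun x h => h.1 rfl⟩

lemma auxPTree_connected (m : ℕ) (P : Fin m → Fin m) (r : Fin m)
    (hP : ∀ i, i ≠ r → i < P i) : (auxPTree m P).Connected := by
  have key : ∀ (d : ℕ) (i : Fin m), m - i.val ≤ d → (auxPTree m P).Reachable i r := by
    intro d
    induction d with
    | zero =>
      intro i hi
      exfalso
      have := i.isLt
      omega
    | succ d ih =>
      intro i hi
      by_cases hir : i = r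
      · subst hir; exact Reachable.refl _
      · have hlt := hP i hir
        have hadj : (auxPTree m P).Adj i (P i) :=
          (show i ≠ P i ∧ (P i = P i ∨ P (P i) = i) from ⟨ne_of_lt hlt, Or.inl rfl⟩)
        refine hadj.reachable.trans (ih (P i) ?_)
        have h1 : i.val < (P i).val := hlt
        have := (P i).isLt
        omega
  rw [connected_iff]
  exact ⟨fun x y => (key m x (by omega)).trans (key m y (by omega)).symm, ⟨r⟩⟩

lemma auxPTree_acyclic (m : ℕ) (P : Fin m → Fin m) (r : Fin m)
    (hr : P r = r) (hP : ∀ i, i ≠ r → i < P i) : (auxPTree m P).IsAcyclic := by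
  intro u c hc
  classical
  have hFne : c.support.toFinset.Nonempty :=
    ⟨u, by rw [List.mem_toFinset]; exact c.start_mem_support⟩
  set mn := c.support.toFinset.min' hFne with hmndef
  have hmn_mem : mn ∈ c.support := by
    have := c.support.toFinset.min'_mem hFne
    rwa [List.mem_toFinset] at this
  have hmn_le : ∀ z ∈ c.support, mn ≤ z := fun z hz =>
    c.support.toFinset.min'_le z (by rwa [List.mem_toFinset])
  have hc2cyc : (c.rotate mn hmn_mem).IsCycle := hc.rotate hmn_mem
  have hsupp2 : ∀ z ∈ (c.rotate mn hmn_mem).support, mn ≤ z := by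
    intro z hz
    apply hmn_le
    rw [Walk.mem_support_iff] at hz
    rcases hz with rfl | hz
    · exact hmn_mem
    · have := (Walk.support_rotate c mn hmn_mem).mem_iff.mp hz
      exact List.mem_of_mem_tail this
  obtain ⟨y1, hadj1, p, hp⟩ := Walk.not_nil_iff.mp (by
    intro hnil
    have hne2 := ((Walk.isCycle_def _).mp hc2cyc).2.1
    exact hne2 (Walk.nil_iff_eq_nil.mp hnil))
  have hylow : ∀ y : Fin m, (auxPTree m P).Adj mn y → mn ≤ y → y = P mn := by
    intro y hadj hy
    rcases hadj.2 with h | h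
    · exact h.symm
    · by_cases hyr : y = r
      · subst hyr
        rw [hr] at h
        exact absurd h.symm hadj.1
      · have hlt := hP y hyr
        rw [h] at hlt
        exact absurd hlt (not_lt.mpr hy)
  have hy1 : y1 = P mn := by
    refine hylow y1 hadj1 (hsupp2 y1 ?_)
    rw [hp, Walk.support_cons]
    exact List.mem_cons_of_mem _ p.start_mem_support
  have hpnotnil : ¬ p.Nil := by
    intro hnil
    have h3 := hc2cyc.three_le_length
    have h4 : (c.rotate mn hmn_mem).length = p.length + 1 := by rw [hp, Walk.length_cons]
    rw [Walk.nil_iff_length_eq] at hnil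
    omega
  have hrevnotnil : ¬ p.reverse.Nil := by
    rw [Walk.nil_iff_length_eq, Walk.length_reverse, ← Walk.nil_iff_length_eq]
    exact hpnotnil
  obtain ⟨y2, hadj2, q, hq⟩ := Walk.not_nil_iff.mp hrevnotnil
  have hy2mem : y2 ∈ (c.rotate mn hmn_mem).support := by
    rw [hp, Walk.support_cons]
    apply List.mem_cons_of_mem
    have h5 : y2 ∈ p.reverse.support := by
      rw [hq, Walk.support_cons]
      exact List.mem_cons_of_mem _ q.start_mem_support
    rwa [Walk.support_reverse, List.mem_reverse] at h5
  have hy2 : y2 = P mn := hylow y2 hadj2 (hsupp2 y2 hy2mem)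
  have hedge1 : (c.rotate mn hmn_mem).edges = s(mn, y1) :: p.edges := by
    rw [hp, Walk.edges_cons]
  have hedge2 : s(mn, y2) ∈ p.edges := by
    have h6 : s(mn, y2) ∈ p.reverse.edges := by
      rw [hq, Walk.edges_cons]
      exact List.mem_cons_self
    rwa [Walk.edges_reverse, List.mem_reverse] at h6
  have htrail := ((Walk.isCycle_def _).mp hc2cyc).1.edges_nodup
  rw [hedge1] at htrail
  have h7 : s(mn, y1) ∉ p.edges := (List.nodup_cons.mp htrail).1
  have h8 : y2 = y1 := hy2.trans hy1.symm
  rw [h8] at hedge2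
  exact h7 hedge2
end PTree

section Main
universe u

/-- Every finite chordal graph has a tree decomposition all of whose bags are cliques. -/
lemma aux_cliqueDecomp {V : Type u} [Fintype V] (G : SimpleGraph V) (hG : IsChordal G) :
    ∃ D : TreeDecomp G, ∀ i : D.ι, G.IsClique (D.bag i : Set V) := by
  classical
  rcases Nat.eq_zero_or_pos (Fintype.card V) with h0 | hpos
  · have hemp : IsEmpty V := Fintype.card_eq_zero_iff.mp h0
    refine ⟨⟨Unit, inferInstance, ⊥, ?_, ?_, fun _ => ∅, ?_, ?_, ?_⟩, ?_⟩
    · rw [connected_iff]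
      exact ⟨fun x y => by cases x; cases y; exact Reachable.refl _, ⟨()⟩⟩
    · intro u c hc
      have h3 := hc.three_le_length
      cases c with
      | nil => simp at h3
      | cons h _ => exact h.elim
    · intro v; exact hemp.elim v
    · intro u w h; exact hemp.elim u
    · intro v; exact hemp.elim v
    · intro i; simp
  · obtain ⟨m, hm⟩ : ∃ m, Fintype.card V = m + 1 := ⟨Fintype.card V - 1, by omega⟩
    obtain ⟨e, he⟩ := aux_peo (m + 1) G hG hm
    set L : Fin (m+1) → Finset (Fin (m+1)) :=
      fun k => Finset.univ.filter (fun p => k < p ∧ G.Adj (e k) (e p)) with hLdef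
    have hLmem : ∀ k p, p ∈ L k ↔ k < p ∧ G.Adj (e k) (e p) := by
      intro k p; simp [hLdef]
    set bag : Fin (m+1) → Finset V := fun k => insert (e k) ((L k).image e) with hbagdef
    have hbagmem : ∀ k z, z ∈ bag k ↔ z = e k ∨ ∃ p ∈ L k, e p = z := by
      intro k z; simp [hbagdef]
    set r : Fin (m+1) := Fin.last m with hrdef
    set P : Fin (m+1) → Fin (m+1) :=
      fun k => if h : (L k).Nonempty then (L k).min' h else r with hPdef
    have hLr : L r = ∅ := by
      rw [Finset.eq_empty_iff_forall_notMem]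
      intro p hp
      rw [hLmem] at hp
      exact absurd hp.1 (not_lt.mpr (Fin.le_last p))
    have hPr : P r = r := by simp [hPdef, hLr]
    have hPlt : ∀ k, k ≠ r → k < P k := by
      intro k hk
      by_cases hLk : (L k).Nonempty
      · have hPk : P k = (L k).min' hLk := by simp only [hPdef]; rw [dif_pos hLk]
        rw [hPk]
        exact ((hLmem _ _).mp ((L k).min'_mem hLk)).1
      · have hPk : P k = r := by simp only [hPdef]; rw [dif_neg hLk]
        rw [hPk]
        exact lt_of_le_of_ne (Fin.le_last k) hk
    set T := auxPTree (m+1) P with hTdef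
    have hconn := auxPTree_connected (m+1) P r hPlt
    have hacyc := auxPTree_acyclic (m+1) P r hPr hPlt
    have hF1 : ∀ (z : V) (k : Fin (m+1)), z ∈ bag k → k ≤ e.symm z := by
      intro z k hz
      rw [hbagmem] at hz
      rcases hz with rfl | ⟨p, hp, rfl⟩
      · rw [Equiv.symm_apply_apply]
      · rw [Equiv.symm_apply_apply]
        exact le_of_lt ((hLmem _ _).mp hp).1
    have hF2 : ∀ (z : V) (k : Fin (m+1)), z ∈ bag k → k ≠ e.symm z → z ∈ bag (P k) := by
      intro z k hz hk
      set t := e.symm z with htdef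
      have hzt : z = e t := (e.apply_symm_apply z).symm
      have htL : t ∈ L k := by
        rw [hbagmem] at hz
        rcases hz with hz1 | ⟨p, hp, hp2⟩
        · exfalso
          apply hk
          rw [htdef, hz1, Equiv.symm_apply_apply]
        · have hpt : p = t := by rw [htdef, ← hp2, Equiv.symm_apply_apply]
          rwa [hpt] at hp
      have hLk : (L k).Nonempty := ⟨t, htL⟩
      have hPk : P k = (L k).min' hLk := by simp only [hPdef]; rw [dif_pos hLk]
      have hmint : (L k).min' hLk ≤ t := (L k).min'_le t htL
      by_cases hEq : (L k).min' hLk = t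
      · rw [hPk, hEq, hbagmem]
        left
        exact hzt
      · have hmem1 := (hLmem k _).mp ((L k).min'_mem hLk)
        have hmem2 := (hLmem k t).mp htL
        have hadj := he k ((L k).min' hLk) t hmem1.1 hmem2.1 hmem1.2 hmem2.2 hEq
        have htmem : t ∈ L ((L k).min' hLk) := by
          rw [hLmem]
          exact ⟨lt_of_le_of_ne hmint hEq, hadj⟩
        rw [hPk, hbagmem]
        right
        exact ⟨t, htmem, hzt.symm⟩
    have hwalkUp : ∀ (z : V) (d : ℕ) (k : Fin (m+1)), z ∈ bag k →
        (e.symm z).val - k.val ≤ d →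
        ∃ w : T.Walk k (e.symm z), ∀ i ∈ w.support, z ∈ bag i := by
      intro z d
      induction d with
      | zero =>
        intro k hk hd
        have h1 : k.val ≤ (e.symm z).val := hF1 z k hk
        have hkt : k = e.symm z := Fin.ext (by omega)
        subst hkt
        exact ⟨Walk.nil, by intro i hi; simp at hi; subst hi; exact hk⟩
      | succ d ih =>
        intro k hk hd
        by_cases hkt : k = e.symm z
        · subst hkt
          exact ⟨Walk.nil, by intro i hi; simp at hi; subst hi; exact hk⟩
        · have hkr : k ≠ r := by
            intro hkr2
            apply hkt
            have h1 : k.val ≤ (e.symm z).val := hF1 z k hk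
            have h2 : (e.symm z).val ≤ m := Fin.is_le (e.symm z)
            have h3 : k.val = m := by rw [hkr2]; rfl
            exact Fin.ext (by omega)
          have hadj : T.Adj k (P k) :=
            (show k ≠ P k ∧ (P k = P k ∨ P (P k) = k) from ⟨ne_of_lt (hPlt k hkr), Or.inl rfl⟩)
          have hbP := hF2 z k hk hkt
          have h1 : (P k).val ≤ (e.symm z).val := hF1 z (P k) hbP
          have hlt : k.val < (P k).val := hPlt k hkr
          have h3 : k.val ≤ (e.symm z).val := hF1 z k hk
          obtain ⟨w, hw⟩ := ih (P k) hbP (by omega)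
          refine ⟨Walk.cons hadj w, ?_⟩
          intro i hi
          rw [Walk.support_cons, List.mem_cons] at hi
          rcases hi with rfl | hi
          · exact hk
          · exact hw i hi
    refine ⟨⟨Fin (m+1), inferInstance, T, hconn, hacyc, bag, ?_, ?_, ?_⟩, ?_⟩
    · intro z
      exact ⟨e.symm z, by rw [hbagmem]; left; exact (e.apply_symm_apply z).symm⟩
    · intro z w hzw
      have hne : e.symm z ≠ e.symm w := fun hh => hzw.ne (e.symm.injective hh)
      rcases lt_or_gt_of_ne hne with hlt | hgt
      · refine ⟨e.symm z, ?_, ?_⟩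
        · rw [hbagmem]; left; exact (e.apply_symm_apply z).symm
        · rw [hbagmem]; right
          refine ⟨e.symm w, ?_, e.apply_symm_apply w⟩
          rw [hLmem]
          refine ⟨hlt, ?_⟩
          rw [e.apply_symm_apply, e.apply_symm_apply]
          exact hzw
      · refine ⟨e.symm w, ?_, ?_⟩
        · rw [hbagmem]; right
          refine ⟨e.symm z, ?_, e.apply_symm_apply z⟩
          rw [hLmem]
          refine ⟨hgt, ?_⟩
          rw [e.apply_symm_apply, e.apply_symm_apply]
          exact hzw.symm
        · rw [hbagmem]; left; exact (e.apply_symm_apply w).symm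
    · intro z i j pwalk hpath hzi hzj k hk
      obtain ⟨w1, hw1⟩ := hwalkUp z (e.symm z).val i hzi (by omega)
      obtain ⟨w2, hw2⟩ := hwalkUp z (e.symm z).val j hzj (by omega)
      have hOcc : ∀ i' ∈ (w1.append w2.reverse).support, z ∈ bag i' := by
        intro i' hi'
        rw [Walk.mem_support_append_iff] at hi'
        rcases hi' with hi' | hi'
        · exact hw1 i' hi'
        · rw [Walk.support_reverse, List.mem_reverse] at hi'
          exact hw2 i' hi'
      have huniq := isAcyclic_iff_path_unique.mp hacyc
        (⟨pwalk, hpath⟩ : T.Path i j) (w1.append w2.reverse).toPath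
      have hps : pwalk = ((w1.append w2.reverse).toPath : T.Walk i j) :=
        congrArg Subtype.val huniq
      rw [hps] at hk
      have hmem : k ∈ (w1.append w2.reverse).support :=
        Walk.support_bypass_subset _ hk
      exact hOcc k hmem
    · intro k z1 hz1 z2 hz2 hne12
      rw [Finset.mem_coe, hbagmem] at hz1 hz2
      rcases hz1 with rfl | ⟨p, hp, rfl⟩
      · rcases hz2 with rfl | ⟨q, hq, rfl⟩
        · exact absurd rfl hne12
        · exact ((hLmem _ _).mp hq).2
      · rcases hz2 with rfl | ⟨q, hq, rfl⟩
        · exact ((hLmem _ _).mp hp).2.symm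
        · have hpq : p ≠ q := fun hh => hne12 (by rw [hh])
          exact he k p q ((hLmem _ _).mp hp).1 ((hLmem _ _).mp hq).1
            ((hLmem _ _).mp hp).2 ((hLmem _ _).mp hq).2 hpq

end Main

/-- Every finite chordal graph has a tree decomposition of minimum width (= treewidth)
in which every bag induces a clique. -/
theorem chordal_treeDecomp_cliques {V : Type*} [Fintype V] (G : SimpleGraph V)
    (hG : IsChordal G) :
    ∃ D : TreeDecomp G, D.width = treewidth G ∧ ∀ i : D.ι, G.IsClique (D.bag i : Set V) := by
  obtain ⟨D0, hD0⟩ := aux_cliqueDecomp G hG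
  refine ⟨D0, ?_, hD0⟩
  have h1 : treewidth G ≤ D0.width := Nat.sInf_le ⟨D0, rfl⟩
  have h2 : D0.width ≤ treewidth G := by
    refine le_csInf ⟨D0.width, D0, rfl⟩ ?_
    rintro w ⟨D', rfl⟩
    exact aux_width_le D0 D' hD0
  omega
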